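/- Exposure determination on closed domain sets: let D₀ be a set of domains with dfee ∉ D₀, and let L be a finite list of treasury events (each with src ≠ dst) that is closed for D₀, meaning every event e ∈ L whose source or destination lies in D₀ has both source and destination in D₀ ∪ {dfee}. Then the balance vector B' obtained by folding step over L from B satisfies ∑_{d ∈ D₀} B' d = ∑_{d ∈ D₀} B d + (∑ over e ∈ L with e.src = dfee and e.dst ∈ D₀ of e.v) − (∑ over e ∈ L with e.src ∈ D₀ and e.dst = dfee of e.v); in particular the total exposure of D₀ is determined by its initial total and the net flow exchanged with the fee domain. -/

import Mathlib

/-- A treasury event: a transfer of value `v` from domain `src` to domain `dst`. -/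
structure Event (D : Type*) where
  src : D
  dst : D
  v : ℤ

/-- Balance-update rule: processing event `e` subtracts `e.v` from the source domain,
adds `e.v` to the destination domain, and leaves all other domains unchanged. -/
def step {D : Type*} [DecidableEq D] (B : D → ℤ) (e : Event D) : D → ℤ :=
  fun d => if d = e.src then B d - e.v else if d = e.dst then B d + e.v else B d

/-- Exposure determination on closed domain sets: if `D₀` (not containing the fee domain)
is closed for the event list `L`, then the total exposure of `D₀` after folding `step`
over `L` equals its initial total plus the net flow exchanged with the fee domain. -/
theorem exposure_on_closed_domains {D : Type*} [Fintype D] [DecidableEq D]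
    (dfee : D) (D₀ : Finset D) (hfee : dfee ∉ D₀)
    (B : D → ℤ) (L : List (Event D))
    (hL : ∀ e ∈ L, e.src ≠ e.dst)
    (hclosed : ∀ e ∈ L, (e.src ∈ D₀ ∨ e.dst ∈ D₀) →
      (e.src ∈ D₀ ∨ e.src = dfee) ∧ (e.dst ∈ D₀ ∨ e.dst = dfee)) :
    ∑ d ∈ D₀, (L.foldl step B) d
      = ∑ d ∈ D₀, B d
        + ((L.filter (fun e => decide (e.src = dfee ∧ e.dst ∈ D₀))).map Event.v).sum
        - ((L.filter (fun e => decide (e.src ∈ D₀ ∧ e.dst = dfee))).map Event.v).sum := by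
  induction L generalizing B with
  | nil => simp
  | cons e L ih =>
    have hsum : ∑ d ∈ D₀, step B e d
        = ∑ d ∈ D₀, B d - (if e.src ∈ D₀ then e.v else 0)
          + (if e.dst ∈ D₀ then e.v else 0) := by
      have hne := hL e (List.mem_cons_self)
      have : ∀ d ∈ D₀, step B e d
          = B d - (if e.src = d then e.v else 0) + (if e.dst = d then e.v else 0) := by
        intro d _
        simp only [step]
        by_cases h1 : d = e.src <;> by_cases h2 : d = e.dst <;>
          simp_all [eq_comm] <;> omega
      rw [Finset.sum_congr rfl this]
      simp [Finset.sum_add_distrib, Finset.sum_sub_distrib, Finset.sum_ite_eq]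
    have hhead := hclosed e (List.mem_cons_self)
    rw [List.foldl_cons, ih _ (fun x hx => hL x (List.mem_cons_of_mem _ hx))
      (fun x hx h => hclosed x (List.mem_cons_of_mem _ hx) h), hsum]
    have hne := hL e (List.mem_cons_self)
    by_cases hs : e.src ∈ D₀ <;> by_cases hd : e.dst ∈ D₀
    · have hs' : ¬ e.src = dfee := fun h => hfee (h ▸ hs)
      have hd' : ¬ e.dst = dfee := fun h => hfee (h ▸ hd)
      simp [hs, hd, hs', hd', hfee]
      try ring
    · have hd' : e.dst = dfee := ((hhead (Or.inl hs)).2).resolve_left hd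
      have hs' : ¬ e.src = dfee := fun h => hfee (h ▸ hs)
      simp [hs, hd, hs', hd', hfee]
      try ring
    · have hs' : e.src = dfee := ((hhead (Or.inr hd)).1).resolve_left hs
      have hd' : ¬ e.dst = dfee := fun h => hfee (h ▸ hd)
      simp [hs, hd, hs', hd', hfee]
      try ring
    · by_cases hs' : e.src = dfee <;> by_cases hd' : e.dst = dfee
      · exact absurd (hs'.trans hd'.symm) hne
      all_goals simp [hs, hd, hs', hd', hfee]
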